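/- arXiv:1611.03017 — 4 statements merged into one kernel-verified Lean document; each statement's English description precedes it below -/
import Mathlib

section
/- Let k ≥ 1 and c : Fin k → ℝ with c_j > 0 for all j. Assume the last index attains the minimum, i.e. c_{k−1} ≤ c_j for all j, and let m be the number of indices j with c_j = c_{k−1}. For s ∈ (0,1) define H(s) = ∫_{{ρ ∈ ℝ^{k−1} : ρ_j ≤ 0 for all j and Σ_{j<k−1} ρ_j ≥ log s}} exp( Σ_{j<k−1} c_j ρ_j + c_{k−1} · (log s − Σ_{j<k−1} ρ_j) ) dρ, with Lebesgue measure on ℝ^{k−1} (so H(s) = s^{c_0} when k = 1). Then the function s ↦ log H(s) − c_{k−1} · log s − (m−1) · log|log s| is bounded on the interval (0, 1/2]. -/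
open MeasureTheory

lemma one_dim_pos (d a : ℝ) (hd : 0 < d) (ha : a ≤ 0) :
    ∫ x in Set.Icc a 0, Real.exp (d * x) = (1 - Real.exp (d * a)) / d := by
  rw [MeasureTheory.integral_Icc_eq_integral_Ioc, ← intervalIntegral.integral_of_le ha]
  have key : ∀ x ∈ Set.uIcc a 0, HasDerivAt (fun y => Real.exp (d * y) / d)
      (Real.exp (d * x)) x := by
    intro x _
    have h1 : HasDerivAt (fun y : ℝ => d * y) d x := by
      simpa using (hasDerivAt_id x).const_mul d
    have h2 := (h1.exp).div_const d
    simpa [mul_div_cancel_right₀ _ hd.ne'] using h2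
  rw [intervalIntegral.integral_eq_sub_of_hasDerivAt key
    ((Real.continuous_exp.comp (continuous_const.mul continuous_id)).intervalIntegrable a 0)]
  simp [sub_div]

lemma one_dim_zero (a : ℝ) (ha : a ≤ 0) :
    ∫ x in Set.Icc a 0, (1:ℝ) = -a := by
  simp [Real.volume_Icc, ENNReal.toReal_ofReal (by linarith : (0:ℝ) ≤ 0 - a), ha]

lemma cube_integral (n : ℕ) (d : Fin n → ℝ) (a : ℝ) :
    ∫ ρ in Set.univ.pi (fun _ : Fin n => Set.Icc a 0), ∏ j, Real.exp (d j * ρ j)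
      = ∏ j, ∫ x in Set.Icc a 0, Real.exp (d j * x) := by
  rw [← MeasureTheory.integral_indicator (MeasurableSet.univ_pi fun _ => measurableSet_Icc)]
  have key : ∀ ρ : Fin n → ℝ, (Set.univ.pi fun _ : Fin n => Set.Icc a 0).indicator
      (fun ρ : Fin n → ℝ => ∏ j, Real.exp (d j * ρ j)) ρ
      = ∏ j, (Set.Icc a 0).indicator (fun x => Real.exp (d j * x)) (ρ j) := by
    intro ρ
    by_cases h : ρ ∈ Set.univ.pi fun _ : Fin n => Set.Icc a 0
    · rw [Set.indicator_of_mem h]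
      refine Finset.prod_congr rfl fun j _ => ?_
      rw [Set.indicator_of_mem (h j trivial)]
    · rw [Set.indicator_of_notMem h]
      simp only [Set.mem_pi, Set.mem_univ, forall_true_left] at h
      push_neg at h
      obtain ⟨j, hj⟩ := h
      exact (Finset.prod_eq_zero (Finset.mem_univ j)
        (Set.indicator_of_notMem hj _)).symm
  simp_rw [key]
  rw [MeasureTheory.volume_pi, MeasureTheory.integral_fintype_prod_eq_prod (ι := Fin n)
    (f := fun j x => (Set.Icc a 0).indicator (fun y => Real.exp (d j * y)) x)]
  exact Finset.prod_congr rfl fun j _ =>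
    MeasureTheory.integral_indicator measurableSet_Icc

lemma cube_eval (n : ℕ) (d : Fin n → ℝ) (hd : ∀ j, 0 ≤ d j) (a : ℝ) (ha : a ≤ 0) :
    ∫ ρ in Set.univ.pi (fun _ : Fin n => Set.Icc a 0), ∏ j, Real.exp (d j * ρ j)
      = ∏ j, (if d j = 0 then -a else (1 - Real.exp (d j * a)) / d j) := by
  rw [cube_integral]
  refine Finset.prod_congr rfl fun j _ => ?_
  by_cases h : d j = 0
  · simp only [h, if_pos, zero_mul, Real.exp_zero]
    exact one_dim_zero a ha
  · rw [if_neg h]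
    exact one_dim_pos _ _ ((hd j).lt_of_ne (Ne.symm h)) ha


/-- local model of the squared `L²`-norm near a normal crossings fiber.
With `k = n + 1 ≥ 1`, positive weights `c : Fin (n+1) → ℝ` whose minimum is attained
at the last index, and `m` the number of indices attaining the minimum, the function
`s ↦ log H s - c (last) * log s - (m - 1) * log |log s|` is bounded on `(0, 1/2]`,
where `H s` is the integral in logarithmic coordinates described in the statement. -/
theorem log_H_bounded
    (n : ℕ) (c : Fin (n + 1) → ℝ) (hc : ∀ j, 0 < c j)
    (hmin : ∀ j, c (Fin.last n) ≤ c j)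
    (m : ℕ) (hm : m = (Finset.univ.filter (fun j => c j = c (Fin.last n))).card) :
    ∃ C : ℝ, ∀ s ∈ Set.Ioc (0 : ℝ) (1 / 2),
      abs
        (Real.log
            (∫ ρ in {ρ : Fin n → ℝ | (∀ j, ρ j ≤ 0) ∧ Real.log s ≤ ∑ j, ρ j},
              Real.exp ((∑ j, c j.castSucc * ρ j) +
                c (Fin.last n) * (Real.log s - ∑ j, ρ j)))
          - c (Fin.last n) * Real.log s
          - ((m : ℝ) - 1) * Real.log (abs (Real.log s))) ≤ C := by
  classical
  set cl := c (Fin.last n) with hcl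
  set d : Fin n → ℝ := fun j => c j.castSucc - cl with hdd
  have hd0 : ∀ j, 0 ≤ d j := fun j => sub_nonneg.2 (hmin _)
  set t : ℝ := (n : ℝ) + 1 with ht
  have ht0 : 0 < t := by positivity
  set Z : Finset (Fin n) := Finset.univ.filter (fun j => d j = 0) with hZdef
  set NZ : Finset (Fin n) := Finset.univ.filter (fun j => ¬ d j = 0) with hNZdef
  set p : ℕ := Z.card with hpdef
  have hdpos : ∀ j ∈ NZ, 0 < d j := fun j hj =>
    (hd0 j).lt_of_ne (Ne.symm (Finset.mem_filter.1 hj).2)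
  have hlog2 : (0:ℝ) < Real.log 2 := Real.log_pos one_lt_two
  -- m = p + 1
  have hmp : m = p + 1 := by
    rw [hm, hpdef, hZdef]
    have h1 : (Finset.univ.filter (fun j : Fin n => d j = 0))
        = (Finset.univ.filter (fun j : Fin n => c j.castSucc = cl)) := by
      apply Finset.filter_congr
      intro j _
      simp [hdd, sub_eq_zero]
    rw [h1, Finset.card_filter, Finset.card_filter, Fin.sum_univ_castSucc, if_pos rfl]
  -- constants
  set w : Fin n → ℝ := fun j => (1 - Real.exp (d j * (-(Real.log 2) / t))) / d j with hwdef
  set K₂ : ℝ := ∏ j ∈ NZ, 1 / d j with hK2def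
  set K₁ : ℝ := (∏ j ∈ NZ, w j) / t ^ p with hK1def
  have hw : ∀ j ∈ NZ, 0 < w j := by
    intro j hj
    apply div_pos _ (hdpos j hj)
    have hx : d j * (-(Real.log 2) / t) < 0 :=
      mul_neg_of_pos_of_neg (hdpos j hj) (div_neg_of_neg_of_pos (by linarith) ht0)
    have := Real.exp_lt_one_iff.2 hx
    linarith
  have hK2 : 0 < K₂ := Finset.prod_pos fun j hj => by
    have := hdpos j hj; positivity
  have hK1 : 0 < K₁ := by
    apply div_pos (Finset.prod_pos hw) (by positivity)
  refine ⟨max |Real.log K₁| |Real.log K₂|, ?_⟩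
  rintro s ⟨hs0, hs2⟩
  set L := Real.log s with hLdef
  have hLneg : L < 0 := Real.log_neg hs0 (by linarith)
  have hL2 : L ≤ -Real.log 2 := by
    have h := Real.log_le_log hs0 hs2
    rw [one_div, Real.log_inv] at h
    exact h
  have hNL : Real.log 2 ≤ -L := by linarith
  have hNLpos : (0:ℝ) < -L := by linarith
  have hLle : L ≤ 0 := hLneg.le
  have hLtle : L / t ≤ 0 := div_nonpos_of_nonpos_of_nonneg hLle ht0.le
  set G : (Fin n → ℝ) → ℝ := fun ρ => ∏ j, Real.exp (d j * ρ j) with hGdef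
  have hGnonneg : ∀ ρ, 0 ≤ G ρ := fun ρ => Finset.prod_nonneg fun j _ => (Real.exp_pos _).le
  have hGcont : Continuous G := by
    apply continuous_finset_prod
    intro j _
    exact Real.continuous_exp.comp (continuous_const.mul (continuous_apply j))
  set S : Set (Fin n → ℝ) := {ρ | (∀ j, ρ j ≤ 0) ∧ L ≤ ∑ j, ρ j} with hSdef
  set cubeU := Set.univ.pi (fun _ : Fin n => Set.Icc L 0) with hcubeU
  set cubeL := Set.univ.pi (fun _ : Fin n => Set.Icc (L / t) 0) with hcubeL
  have hS_sub : S ⊆ cubeU := by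
    rintro ρ ⟨h1, h2⟩ j _
    refine ⟨?_, h1 j⟩
    have h := Finset.single_le_sum (f := fun i => -ρ i)
      (fun i _ => neg_nonneg.2 (h1 i)) (Finset.mem_univ j)
    have h3 : ∑ i, -ρ i = -∑ i, ρ i := by simp
    rw [h3] at h
    have h' : -ρ j ≤ -∑ i, ρ i := h
    linarith
  have hsub_S : cubeL ⊆ S := by
    intro ρ hρ
    refine ⟨fun j => (hρ j trivial).2, ?_⟩
    have h1 : (n:ℝ) * (L / t) ≤ ∑ j, ρ j := by
      calc (n:ℝ) * (L / t) = ∑ _j : Fin n, L / t := by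
            rw [Finset.sum_const, Finset.card_univ, Fintype.card_fin, nsmul_eq_mul]
        _ ≤ ∑ j, ρ j := Finset.sum_le_sum fun j _ => (hρ j trivial).1
    have h2 : (n:ℝ) / t ≤ 1 := (div_le_one ht0).2 (by rw [ht]; linarith)
    have h3 : (0:ℝ) ≤ (n:ℝ) / t := by positivity
    have h4 : L ≤ (n:ℝ) * (L / t) := by
      have : (n:ℝ) * (L / t) = L * ((n:ℝ) / t) := by ring
      rw [this]
      nlinarith
    linarith
  have hcompact : IsCompact cubeU := isCompact_univ_pi fun _ => isCompact_Icc
  have hIntU : IntegrableOn G cubeU := hGcont.continuousOn.integrableOn_compact hcompact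
  have hIntS : IntegrableOn G S := hIntU.mono_set hS_sub
  have hup : ∫ ρ in S, G ρ ≤ ∫ ρ in cubeU, G ρ :=
    setIntegral_mono_set hIntU (ae_of_all _ hGnonneg) (HasSubset.Subset.eventuallyLE hS_sub)
  have hlo : ∫ ρ in cubeL, G ρ ≤ ∫ ρ in S, G ρ :=
    setIntegral_mono_set hIntS (ae_of_all _ hGnonneg) (HasSubset.Subset.eventuallyLE hsub_S)
  have hEU : ∫ ρ in cubeU, G ρ
      = ∏ j, (if d j = 0 then -L else (1 - Real.exp (d j * L)) / d j) :=
    cube_eval n d hd0 L hLle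
  have hEL : ∫ ρ in cubeL, G ρ
      = ∏ j, (if d j = 0 then -(L / t) else (1 - Real.exp (d j * (L / t))) / d j) :=
    cube_eval n d hd0 (L / t) hLtle
  -- upper product bound
  have hprod_up : ∏ j, (if d j = 0 then -L else (1 - Real.exp (d j * L)) / d j)
      ≤ (-L) ^ p * K₂ := by
    rw [← Finset.prod_filter_mul_prod_filter_not Finset.univ (fun j => d j = 0)]
    have e1 : ∏ j ∈ Z, (if d j = 0 then -L else (1 - Real.exp (d j * L)) / d j)
        = (-L) ^ p := by
      rw [Finset.prod_congr rfl (fun j hj => if_pos (Finset.mem_filter.1 hj).2),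
        Finset.prod_const, hpdef]
    have e2 : ∏ j ∈ NZ, (if d j = 0 then -L else (1 - Real.exp (d j * L)) / d j)
        ≤ K₂ := by
      rw [hK2def]
      apply Finset.prod_le_prod
      · intro j hj
        rw [if_neg (Finset.mem_filter.1 hj).2]
        have hdj := hdpos j hj
        have : Real.exp (d j * L) ≤ 1 :=
          Real.exp_le_one_iff.2 (mul_nonpos_of_nonneg_of_nonpos hdj.le hLle)
        apply div_nonneg (by linarith) hdj.le
      · intro j hj
        rw [if_neg (Finset.mem_filter.1 hj).2]
        have hdj := hdpos j hj
        exact div_le_div₀ zero_le_one (by linarith [Real.exp_pos (d j * L)]) hdj le_rfl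
    calc (∏ j ∈ Z, _) * (∏ j ∈ NZ, _) = (-L)^p * ∏ j ∈ NZ, (if d j = 0 then -L else (1 - Real.exp (d j * L)) / d j) := by rw [e1]
      _ ≤ (-L) ^ p * K₂ := by
          apply mul_le_mul_of_nonneg_left e2 (by positivity)
  -- lower product bound
  have hprod_lo : K₁ * (-L) ^ p
      ≤ ∏ j, (if d j = 0 then -(L / t) else (1 - Real.exp (d j * (L / t))) / d j) := by
    rw [← Finset.prod_filter_mul_prod_filter_not Finset.univ (fun j => d j = 0)]
    have e1 : ∏ j ∈ Z, (if d j = 0 then -(L/t) else (1 - Real.exp (d j * (L/t))) / d j)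
        = (-L) ^ p / t ^ p := by
      rw [Finset.prod_congr rfl (fun j hj => if_pos (Finset.mem_filter.1 hj).2),
        Finset.prod_const, hpdef, ← neg_div, div_pow]
    have e2 : ∏ j ∈ NZ, w j
        ≤ ∏ j ∈ NZ, (if d j = 0 then -(L/t) else (1 - Real.exp (d j * (L/t))) / d j) := by
      apply Finset.prod_le_prod (fun j hj => (hw j hj).le)
      intro j hj
      rw [if_neg (Finset.mem_filter.1 hj).2, hwdef]
      have hdj := hdpos j hj
      have hdiv : L / t ≤ -(Real.log 2) / t := div_le_div_of_nonneg_right hL2 ht0.le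
      have hee : Real.exp (d j * (L / t)) ≤ Real.exp (d j * (-(Real.log 2) / t)) := by
        apply Real.exp_le_exp.2
        exact mul_le_mul_of_nonneg_left hdiv hdj.le
      have hnn : 0 ≤ 1 - Real.exp (d j * (L / t)) := by
        have : Real.exp (d j * (L / t)) ≤ 1 :=
          Real.exp_le_one_iff.2 (mul_nonpos_of_nonneg_of_nonpos hdj.le hLtle)
        linarith
      exact div_le_div₀ hnn (by linarith) hdj le_rfl
    calc K₁ * (-L) ^ p = ((-L) ^ p / t ^ p) * ∏ j ∈ NZ, w j := by
          rw [hK1def]; ring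
      _ ≤ ((-L) ^ p / t ^ p) * ∏ j ∈ NZ, (if d j = 0 then -(L/t) else (1 - Real.exp (d j * (L/t))) / d j) := by
          apply mul_le_mul_of_nonneg_left e2 (by positivity)
      _ = _ := by rw [e1]
  set I := ∫ ρ in S, G ρ with hIdef
  have hIup : I ≤ K₂ * (-L) ^ p := by
    rw [mul_comm]
    calc I ≤ ∫ ρ in cubeU, G ρ := hup
      _ ≤ (-L)^p * K₂ := by rw [hEU]; exact hprod_up
  have hIlow : K₁ * (-L) ^ p ≤ I :=
    le_trans (by rw [← hEL] at hprod_lo; exact hprod_lo) hlo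
  have hIpos : 0 < I := lt_of_lt_of_le (by positivity) hIlow
  -- rewrite the integral
  have hHeq : (∫ ρ in S, Real.exp ((∑ j, c j.castSucc * ρ j) + cl * (L - ∑ j, ρ j)))
      = Real.exp (cl * L) * I := by
    rw [hIdef, ← integral_const_mul]
    apply MeasureTheory.integral_congr_ae
    refine Filter.Eventually.of_forall fun ρ => ?_
    simp only [hGdef]
    rw [← Real.exp_sum, ← Real.exp_add]
    congr 1
    have : ∑ j, d j * ρ j = ∑ j, c j.castSucc * ρ j - cl * ∑ j, ρ j := by
      rw [Finset.mul_sum, ← Finset.sum_sub_distrib]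
      exact Finset.sum_congr rfl fun j _ => by rw [hdd]; ring
    rw [this]; ring
  rw [hHeq, Real.log_mul (Real.exp_ne_zero _) hIpos.ne', Real.log_exp,
    abs_of_neg hLneg, hmp]
  have hcast : ((p:ℝ) + 1 - 1) = (p:ℝ) := by push_cast; ring
  have hgoal : cl * L + Real.log I - cl * L - ((↑(p+1) : ℝ) - 1) * Real.log (-L)
      = Real.log I - (p:ℝ) * Real.log (-L) := by push_cast; ring
  rw [hgoal]
  have h1 : Real.log I ≤ Real.log K₂ + (p:ℝ) * Real.log (-L) := by
    calc Real.log I ≤ Real.log (K₂ * (-L) ^ p) := Real.log_le_log hIpos hIup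
      _ = Real.log K₂ + (p:ℝ) * Real.log (-L) := by
          rw [Real.log_mul hK2.ne' (by positivity), Real.log_pow]
  have h2 : Real.log K₁ + (p:ℝ) * Real.log (-L) ≤ Real.log I := by
    calc Real.log K₁ + (p:ℝ) * Real.log (-L)
        = Real.log (K₁ * (-L) ^ p) := by
          rw [Real.log_mul hK1.ne' (by positivity), Real.log_pow]
      _ ≤ Real.log I := Real.log_le_log (by positivity) hIlow
  have h3 := le_abs_self (Real.log K₂)
  have h4 := neg_abs_le (Real.log K₁)
  have h5 := le_max_left |Real.log K₁| |Real.log K₂|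
  have h6 := le_max_right |Real.log K₁| |Real.log K₂|
  rw [abs_le]
  constructor <;> linarith
end

section
/- For all tuples x ∈ ℝ^a and y ∈ ℝ^b, P'(x ⧺ y) = P'(x) · P(y) + P(x) · P'(y), where x ⧺ y ∈ ℝ^{a+b} denotes the concatenation of the two tuples. -/
noncomputable def td (u : ℝ) : ℝ := if u = 0 then 1 else u / (Real.exp u - 1)

/-- `p`-th elementary symmetric polynomial of a tuple of reals. -/
noncomputable def esymm {n : ℕ} (x : Fin n → ℝ) (p : ℕ) : ℝ :=
  ∑ t ∈ Finset.univ.powersetCard p, ∏ i ∈ t, x i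

/-- `P(x) = (∏ td(x_i)) · Σ_p (−1)^p e_p(exp x)`. -/
noncomputable def Pcl {n : ℕ} (x : Fin n → ℝ) : ℝ :=
  (∏ i, td (x i)) *
    ∑ p ∈ Finset.range (n + 1), (-1 : ℝ) ^ p * esymm (fun i => Real.exp (x i)) p

/-- `P'(x) = (∏ td(x_i)) · Σ_p (−1)^p p e_p(exp x)`. -/
noncomputable def Pcl' {n : ℕ} (x : Fin n → ℝ) : ℝ :=
  (∏ i, td (x i)) *
    ∑ p ∈ Finset.range (n + 1), (-1 : ℝ) ^ p * (p : ℝ) * esymm (fun i => Real.exp (x i)) p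

/-- `P''(x) = (∏ td(x_i)) · Σ_p (−1)^p (p(p−1)/2) e_p(exp x)`. -/
noncomputable def Pcl'' {n : ℕ} (x : Fin n → ℝ) : ℝ :=
  (∏ i, td (x i)) *
    ∑ p ∈ Finset.range (n + 1),
      (-1 : ℝ) ^ p * ((p : ℝ) * ((p : ℝ) - 1) / 2) * esymm (fun i => Real.exp (x i)) p

noncomputable def Qpoly {n : ℕ} (z : Fin n → ℝ) : Polynomial ℝ :=
  ∏ i, (1 - Polynomial.C (z i) * Polynomial.X)

lemma Qpoly_eq {n : ℕ} (z : Fin n → ℝ) :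
    Qpoly z = ∑ p ∈ Finset.range (n + 1),
      Polynomial.C ((-1 : ℝ) ^ p * esymm z p) * Polynomial.X ^ p := by
  have h : Qpoly z = ∏ i, (-(Polynomial.C (z i) * Polynomial.X) + 1) := by
    unfold Qpoly; congr 1; ext i; ring_nf
  rw [h, Finset.prod_add]
  rw [Finset.powerset_card_disjiUnion]
  erw [Finset.sum_disjiUnion]
  rw [Finset.card_univ, Fintype.card_fin]
  refine Finset.sum_congr rfl fun p _ => ?_
  rw [esymm, Polynomial.C_mul, map_sum Polynomial.C _ _, Finset.mul_sum, Finset.sum_mul]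
  refine Finset.sum_congr rfl fun t ht => ?_
  have hc : t.card = p := (Finset.mem_powersetCard.mp ht).2
  rw [Finset.prod_const_one, mul_one]
  have e1 : ∏ i ∈ t, -(Polynomial.C (z i) * Polynomial.X)
      = ∏ i ∈ t, ((-1) * (Polynomial.C (z i) * Polynomial.X)) :=
    Finset.prod_congr rfl fun i _ => by ring
  rw [e1, Finset.prod_mul_distrib, Finset.prod_mul_distrib, Finset.prod_const,
    Finset.prod_const, hc]
  rw [show ∏ i ∈ t, Polynomial.C (z i) = Polynomial.C (∏ i ∈ t, z i) from (map_prod _ _ _).symm,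
    map_pow, map_neg, map_one]
  ring

lemma Qpoly_eval {n : ℕ} (z : Fin n → ℝ) :
    (Qpoly z).eval 1 = ∑ p ∈ Finset.range (n + 1), (-1 : ℝ) ^ p * esymm z p := by
  rw [Qpoly_eq]
  simp [Polynomial.eval_finset_sum]

lemma Qpoly_deriv_eval {n : ℕ} (z : Fin n → ℝ) :
    (Polynomial.derivative (Qpoly z)).eval 1
      = ∑ p ∈ Finset.range (n + 1), (-1 : ℝ) ^ p * (p : ℝ) * esymm z p := by
  rw [Qpoly_eq, map_sum, Polynomial.eval_finset_sum]
  refine Finset.sum_congr rfl fun p _ => ?_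
  have h0 : Polynomial.derivative ((-1 : Polynomial ℝ) ^ p) = 0 := by
    rw [← map_one Polynomial.C, ← map_neg, ← map_pow, Polynomial.derivative_C]
  simp [Polynomial.derivative_C_mul, Polynomial.derivative_X_pow, h0]
  ring

lemma prod_append {a b : ℕ} (x : Fin a → ℝ) (y : Fin b → ℝ) (g : ℝ → ℝ) :
    (∏ i, g (Fin.append x y i)) = (∏ i, g (x i)) * ∏ i, g (y i) := by
  rw [Fin.prod_univ_add]
  simp

lemma Qpoly_append {a b : ℕ} (x : Fin a → ℝ) (y : Fin b → ℝ) :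
    Qpoly (fun i => Real.exp (Fin.append x y i))
      = Qpoly (fun i => Real.exp (x i)) * Qpoly (fun i => Real.exp (y i)) := by
  unfold Qpoly
  rw [Fin.prod_univ_add]
  simp

/-- Leibniz rule `P'(x ⧺ y) = P'(x)·P(y) + P(x)·P'(y)`. -/
theorem Pcl'_append (a b : ℕ) (x : Fin a → ℝ) (y : Fin b → ℝ) :
    Pcl' (Fin.append x y) = Pcl' x * Pcl y + Pcl x * Pcl' y := by
  unfold Pcl Pcl'
  rw [← Qpoly_eval, ← Qpoly_eval, ← Qpoly_deriv_eval, ← Qpoly_deriv_eval, ← Qpoly_deriv_eval,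
    prod_append x y td, Qpoly_append, Polynomial.derivative_mul, Polynomial.eval_add,
    Polynomial.eval_mul, Polynomial.eval_mul]
  ring
end

section
/- For every r ≥ 1 and every tuple x ∈ ℝ^r, P'(x) = Σ_{i=1}^r P'(x_i) · ∏_{j ≠ i} P(x_j), where for a single real number u one has P(u) = −u and P'(u) = −td(u) · exp(u). -/
lemma td_mul_one_sub_exp (u : ℝ) : td u * (1 - Real.exp u) = -u := by
  unfold td
  by_cases h : u = 0
  · simp [h]
  · rw [if_neg h]
    have hne : Real.exp u - 1 ≠ 0 := by
      intro hc
      apply h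
      have : Real.exp u = 1 := by linarith
      simpa using Real.exp_injective (by simpa using this)
    field_simp
    ring

lemma keyF {α : Type*} [DecidableEq α] (s : Finset α) (y : α → ℝ) :
    ∏ j ∈ s, (1 - y j) = ∑ t ∈ s.powerset, ∏ j ∈ t, (-(y j)) := by
  induction s using Finset.induction_on with
  | empty => simp
  | @insert a s ha ih =>
    rw [Finset.sum_powerset_insert ha, Finset.prod_insert ha, ih]
    have : ∀ t ∈ s.powerset, ∏ j ∈ insert a t, (-(y j)) = (-(y a)) * ∏ j ∈ t, (-(y j)) := by
      intro t ht
      rw [Finset.prod_insert]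
      intro hat
      exact ha (Finset.mem_powerset.mp ht hat)
    rw [Finset.sum_congr rfl this, ← Finset.mul_sum]
    ring

lemma keyG {α : Type*} [DecidableEq α] (s : Finset α) (y : α → ℝ) :
    ∑ t ∈ s.powerset, (t.card : ℝ) * ∏ j ∈ t, (-(y j)) =
      ∑ i ∈ s, (-(y i)) * ∏ j ∈ s.erase i, (1 - y j) := by
  induction s using Finset.induction_on with
  | empty => simp
  | @insert a s ha ih =>
    rw [Finset.sum_powerset_insert ha, Finset.sum_insert ha]
    have h1 : ∀ t ∈ s.powerset,
        ((insert a t).card : ℝ) * ∏ j ∈ insert a t, (-(y j)) =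
          (-(y a)) * (((t.card : ℝ) + 1) * ∏ j ∈ t, (-(y j))) := by
      intro t ht
      have hat : a ∉ t := fun hat => ha (Finset.mem_powerset.mp ht hat)
      rw [Finset.card_insert_of_notMem hat, Finset.prod_insert hat]
      push_cast
      ring
    rw [Finset.sum_congr rfl h1, ← Finset.mul_sum]
    have h2 : ∑ t ∈ s.powerset, (((t.card : ℝ) + 1) * ∏ j ∈ t, (-(y j))) =
        (∑ t ∈ s.powerset, (t.card : ℝ) * ∏ j ∈ t, (-(y j))) +
          ∑ t ∈ s.powerset, ∏ j ∈ t, (-(y j)) := by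
      rw [← Finset.sum_add_distrib]
      exact Finset.sum_congr rfl fun t _ => by ring
    have herase : (insert a s).erase a = s := Finset.erase_insert ha
    have h3 : ∀ i ∈ s, (-(y i)) * ∏ j ∈ (insert a s).erase i, (1 - y j) =
        (1 - y a) * ((-(y i)) * ∏ j ∈ s.erase i, (1 - y j)) := by
      intro i hi
      have hia : i ≠ a := fun h => ha (h ▸ hi)
      rw [Finset.erase_insert_of_ne hia.symm, Finset.prod_insert (by simp [ha])]
      ring
    rw [Finset.sum_congr rfl h3, ← Finset.mul_sum, herase, ← ih, h2, keyF]
    ring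

open Finset in
/-- for `r ≥ 1`,
`P'(x) = Σ_i P'(x_i) · ∏_{j ≠ i} P(x_j)` with `P(u) = −u` and `P'(u) = −td(u)·exp(u)`. -/
theorem Pcl'_eq_sum (r : ℕ) (hr : 1 ≤ r) (x : Fin r → ℝ) :
    Pcl' x =
      ∑ i, (-(td (x i) * Real.exp (x i))) *
        ∏ j ∈ Finset.univ.erase i, (-(x j)) := by
  set y : Fin r → ℝ := fun i => Real.exp (x i) with hy
  have hcard : (Finset.univ : Finset (Fin r)).card = r := by simp
  have hsum : ∑ p ∈ Finset.range (r + 1), (-1 : ℝ) ^ p * (p : ℝ) * esymm y p =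
      ∑ t ∈ (Finset.univ : Finset (Fin r)).powerset, (t.card : ℝ) * ∏ j ∈ t, (-(y j)) := by
    rw [Finset.sum_powerset, hcard]
    refine Finset.sum_congr rfl fun p _ => ?_
    unfold esymm
    rw [Finset.mul_sum]
    refine Finset.sum_congr rfl fun t ht => ?_
    have hc : t.card = p := (Finset.mem_powersetCard.mp ht).2
    have : ∏ j ∈ t, (-(y j)) = (-1 : ℝ) ^ t.card * ∏ j ∈ t, y j := by
      rw [← Finset.prod_const, ← Finset.prod_mul_distrib]; simp
    rw [this, hc]; ring
  unfold Pcl'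
  rw [hsum, keyG, Finset.mul_sum]
  refine Finset.sum_congr rfl fun i _ => ?_
  have hprod : ∏ k, td (x k) = td (x i) * ∏ j ∈ Finset.univ.erase i, td (x j) :=
    (Finset.mul_prod_erase _ _ (Finset.mem_univ i)).symm
  have : ∏ j ∈ Finset.univ.erase i, (-(x j)) =
      ∏ j ∈ Finset.univ.erase i, (td (x j) * (1 - y j)) :=
    Finset.prod_congr rfl fun j _ => (td_mul_one_sub_exp (x j)).symm
  rw [this, Finset.prod_mul_distrib, hprod]
  ring
end

section
/- For every r ≥ 1 and every tuple x ∈ ℝ^r, P''(x) = Σ_{1 ≤ i < j ≤ r} P'(x_i) · P'(x_j) · ∏_{k ∉ {i,j}} P(x_k), where for a single real number u one has P(u) = −u and P'(u) = −td(u) · exp(u). In particular P''(x) = 0 when r = 1. -/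
lemma prod_neg_aux {ι : Type*} (s : Finset ι) (y : ι → ℝ) :
    ∏ k ∈ s, (-(y k)) = (-1 : ℝ) ^ s.card * ∏ k ∈ s, y k := by
  rw [← Finset.prod_const (-1 : ℝ), ← Finset.prod_mul_distrib]
  exact Finset.prod_congr rfl fun k _ => by ring

lemma prod_one_sub {ι : Type*} [DecidableEq ι] (E : Finset ι) (y : ι → ℝ) :
    ∏ k ∈ E, (1 - y k) = ∑ s ∈ E.powerset, (-1 : ℝ) ^ s.card * ∏ k ∈ s, y k := by
  calc ∏ k ∈ E, (1 - y k) = ∏ k ∈ E, (-(y k) + 1) := by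
        exact Finset.prod_congr rfl fun k _ => by ring
    _ = ∑ s ∈ E.powerset, (∏ k ∈ s, -(y k)) * ∏ k ∈ E \ s, (1 : ℝ) :=
        Finset.prod_add _ _ _
    _ = ∑ s ∈ E.powerset, (-1 : ℝ) ^ s.card * ∏ k ∈ s, y k := by
        exact Finset.sum_congr rfl fun s _ => by rw [Finset.prod_const_one, mul_one, prod_neg_aux]

lemma count_pairs {ι : Type*} [LinearOrder ι] (t : Finset ι) :
    2 * ∑ i ∈ t, ((t.filter (fun j => i < j)).card) = t.card * t.card - t.card := by
  classical
  have hsum : ∑ i ∈ t, ((t.filter (fun j => i < j)).card)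
      = ((t ×ˢ t).filter (fun z => z.1 < z.2)).card := by
    rw [Finset.card_filter, Finset.sum_product]
    exact Finset.sum_congr rfl fun i _ => by rw [Finset.card_filter]
  have hswap : ((t ×ˢ t).filter (fun z => z.1 < z.2)).card
      = ((t ×ˢ t).filter (fun z => z.2 < z.1)).card := by
    apply Finset.card_nbij' Prod.swap Prod.swap <;>
      simp +contextual [Set.MapsTo, Set.LeftInvOn, Set.RightInvOn, Finset.mem_filter, Finset.mem_product, and_comm]
  have hunion : (t ×ˢ t).filter (fun z => z.1 < z.2) ∪ (t ×ˢ t).filter (fun z => z.2 < z.1)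
      = t.offDiag := by
    rw [← Finset.filter_or]
    ext z; simp [Finset.mem_offDiag, lt_or_lt_iff_ne, and_assoc]
  have hdisj : Disjoint ((t ×ˢ t).filter (fun z => z.1 < z.2))
      ((t ×ˢ t).filter (fun z => z.2 < z.1)) := by
    rw [Finset.disjoint_left]
    intro z hz hz'
    simp only [Finset.mem_filter] at hz hz'
    exact absurd hz'.2 (not_lt_of_gt hz.2)
  have hcu := Finset.card_union_of_disjoint hdisj
  rw [hunion, Finset.offDiag_card] at hcu
  omega

lemma count_pairs_real {ι : Type*} [LinearOrder ι] (t : Finset ι) :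
    (t.card : ℝ) * ((t.card : ℝ) - 1) / 2
      = ∑ i ∈ t, ((t.filter (fun j => i < j)).card : ℝ) := by
  have h := count_pairs t
  have hle : t.card ≤ t.card * t.card := by nlinarith [Nat.zero_le t.card]
  have h2 : ((2 * ∑ i ∈ t, ((t.filter (fun j => i < j)).card) : ℕ) : ℝ)
      = ((t.card * t.card - t.card : ℕ) : ℝ) := congrArg (Nat.cast : ℕ → ℝ) h
  rw [Nat.cast_sub hle] at h2
  push_cast at h2
  linarith

lemma key_identity (n : ℕ) (y : Fin n → ℝ) :
    ∑ p ∈ Finset.range (n + 1), (-1 : ℝ) ^ p * ((p : ℝ) * ((p : ℝ) - 1) / 2) * esymm y p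
      = ∑ i, ∑ j ∈ Finset.univ.filter (fun j => i < j),
          y i * y j * ∏ k ∈ (Finset.univ.erase i).erase j, (1 - y k) := by
  classical
  have h1 : ∑ p ∈ Finset.range (n + 1), (-1 : ℝ) ^ p * ((p : ℝ) * ((p : ℝ) - 1) / 2) * esymm y p
      = ∑ t ∈ (Finset.univ : Finset (Fin n)).powerset,
          (-1 : ℝ) ^ t.card * ((t.card : ℝ) * ((t.card : ℝ) - 1) / 2) * ∏ k ∈ t, y k := by
    rw [Finset.sum_powerset]
    rw [Finset.card_univ, Fintype.card_fin]
    refine Finset.sum_congr rfl fun p hp => ?_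
    unfold esymm
    rw [Finset.mul_sum]
    refine Finset.sum_congr rfl fun t ht => ?_
    rw [(Finset.mem_powersetCard.mp ht).2]
  rw [h1]
  have h2 : ∀ t : Finset (Fin n),
      (-1 : ℝ) ^ t.card * ((t.card : ℝ) * ((t.card : ℝ) - 1) / 2) * ∏ k ∈ t, y k
      = ∑ i ∈ t, ∑ j ∈ t.filter (fun j => i < j), (-1 : ℝ) ^ t.card * ∏ k ∈ t, y k := by
    intro t
    have hcon : ∀ i : Fin n, ∑ j ∈ t.filter (fun j => i < j), (-1 : ℝ) ^ t.card * ∏ k ∈ t, y k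
        = ((t.filter (fun j => i < j)).card : ℝ) * ((-1 : ℝ) ^ t.card * ∏ k ∈ t, y k) := by
      intro i; rw [Finset.sum_const, nsmul_eq_mul]
    simp only [hcon]
    rw [← Finset.sum_mul, ← count_pairs_real]
    ring
  simp only [h2]
  rw [Finset.sum_comm' (t' := (Finset.univ : Finset (Fin n)))
    (s' := fun i => Finset.univ.powerset.filter (fun t => i ∈ t))
    (fun t i => by simp [Finset.mem_filter, and_comm])]
  refine Finset.sum_congr rfl fun i _ => ?_
  rw [Finset.sum_comm' (t' := Finset.univ.filter (fun j => i < j))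
    (s' := fun j => Finset.univ.powerset.filter (fun t => i ∈ t ∧ j ∈ t))
    (fun t j => by
      simp only [Finset.mem_filter, Finset.mem_powerset, Finset.mem_univ, true_and]
      tauto)]
  refine Finset.sum_congr rfl fun j hj => ?_
  have hij : i < j := by simpa using (Finset.mem_filter.mp hj).2
  have hne : i ≠ j := ne_of_lt hij
  rw [prod_one_sub, Finset.mul_sum]
  refine Finset.sum_nbij' (fun t => (t.erase i).erase j) (fun s => insert i (insert j s))
    ?_ ?_ ?_ ?_ ?_
  · intro t ht
    simp only [Finset.mem_powerset]
    intro k hk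
    simp only [Finset.mem_erase] at hk ⊢
    exact ⟨hk.1, hk.2.1, Finset.mem_univ k⟩
  · intro s hs
    simp only [Finset.mem_powerset] at hs
    have his : i ∉ s := fun h => by
      have := hs h; simp [Finset.mem_erase] at this
    have hjs : j ∉ s := fun h => by
      have := hs h; simp [Finset.mem_erase] at this
    simp only [Finset.mem_filter, Finset.mem_powerset, Finset.mem_insert]
    exact ⟨fun k _ => Finset.mem_univ k, by simp, by simp⟩
  · intro t ht
    simp only [Finset.mem_filter, Finset.mem_powerset] at ht
    have hjt : j ∈ t.erase i := Finset.mem_erase.mpr ⟨hne.symm, ht.2.2⟩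
    rw [Finset.insert_erase hjt, Finset.insert_erase ht.2.1]
  · intro s hs
    simp only [Finset.mem_powerset] at hs
    have his : i ∉ s := fun h => by
      have := hs h; simp [Finset.mem_erase] at this
    have hjs : j ∉ s := fun h => by
      have := hs h; simp [Finset.mem_erase] at this
    have hij' : i ∉ insert j s := by simp [hne, his]
    rw [Finset.erase_insert hij', Finset.erase_insert hjs]
  · intro t ht
    simp only [Finset.mem_filter, Finset.mem_powerset] at ht
    have hjt : j ∈ t.erase i := Finset.mem_erase.mpr ⟨hne.symm, ht.2.2⟩
    have hcard : t.card = ((t.erase i).erase j).card + 2 := by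
      rw [Finset.card_erase_of_mem hjt, Finset.card_erase_of_mem ht.2.1]
      have h1 : 1 ≤ t.card := Finset.card_pos.mpr ⟨i, ht.2.1⟩
      have h2 : 1 ≤ (t.erase i).card := Finset.card_pos.mpr ⟨j, hjt⟩
      rw [Finset.card_erase_of_mem ht.2.1] at h2
      omega
    have hprod : ∏ k ∈ t, y k = y i * (y j * ∏ k ∈ (t.erase i).erase j, y k) := by
      rw [← Finset.mul_prod_erase _ y ht.2.1, ← Finset.mul_prod_erase _ y hjt]
    rw [hprod, hcard]
    ring

/-- for `r ≥ 1`,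
`P''(x) = Σ_{i<j} P'(x_i)·P'(x_j)·∏_{k ∉ {i,j}} P(x_k)` with `P(u) = −u`,
`P'(u) = −td(u)·exp(u)`; in particular it vanishes when `r = 1`. -/
theorem Pcl''_eq_sum (r : ℕ) (hr : 1 ≤ r) (x : Fin r → ℝ) :
    Pcl'' x =
      ∑ i, ∑ j ∈ Finset.univ.filter (fun j => i < j),
        (-(td (x i) * Real.exp (x i))) * (-(td (x j) * Real.exp (x j))) *
          ∏ k ∈ (Finset.univ.erase i).erase j, (-(x k)) := by
  classical
  unfold Pcl''
  rw [key_identity r (fun i => Real.exp (x i)), Finset.mul_sum]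
  refine Finset.sum_congr rfl fun i _ => ?_
  rw [Finset.mul_sum]
  refine Finset.sum_congr rfl fun j hj => ?_
  have hij : i < j := by simpa using (Finset.mem_filter.mp hj).2
  have hne : i ≠ j := ne_of_lt hij
  have hprod : (∏ k, td (x k))
      = td (x i) * (td (x j) * ∏ k ∈ (Finset.univ.erase i).erase j, td (x k)) := by
    rw [← Finset.mul_prod_erase _ _ (Finset.mem_univ i),
      ← Finset.mul_prod_erase _ _ (Finset.mem_erase.mpr ⟨hne.symm, Finset.mem_univ j⟩)]
  have hE : (∏ k ∈ (Finset.univ.erase i).erase j, td (x k)) *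
        ∏ k ∈ (Finset.univ.erase i).erase j, (1 - Real.exp (x k))
      = ∏ k ∈ (Finset.univ.erase i).erase j, (-(x k)) := by
    rw [← Finset.prod_mul_distrib]
    exact Finset.prod_congr rfl fun k _ => td_mul_one_sub_exp (x k)
  rw [hprod]
  linear_combination
    (td (x i) * Real.exp (x i) * (td (x j) * Real.exp (x j))) * hE
end
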